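/- Let L ⊂ ℝⁿ be a finite set of landmarks and α > 0. The collection of α-cells A_l(α) = B̄_α(l) ∩ { x : d(x,l) ≤ d(x,l') for all l' ∈ L } is a grid on its union: the cells are nonempty compact sets, each cell equals the closure of its interior, distinct cells have disjoint interiors, and any compact subset of the union is covered by finitely many cells. -/

import Mathlib

open Metric Set

section Aux

variable {E : Type*} [NormedAddCommGroup E] [InnerProductSpace ℝ E]

private lemma bisector_iff (x l m : E) :
    dist x l ≤ dist x m ↔ inner ℝ x (m - l) ≤ (‖m‖ ^ 2 - ‖l‖ ^ 2) / 2 := by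
  have h1 : dist x l ^ 2 = ‖x‖ ^ 2 - 2 * inner ℝ x l + ‖l‖ ^ 2 := by
    rw [dist_eq_norm]; exact norm_sub_sq_real x l
  have h2 : dist x m ^ 2 = ‖x‖ ^ 2 - 2 * inner ℝ x m + ‖m‖ ^ 2 := by
    rw [dist_eq_norm]; exact norm_sub_sq_real x m
  have hv : (inner ℝ x (m - l) : ℝ) = inner ℝ x m - inner ℝ x l := inner_sub_right x m l
  constructor
  · intro h
    nlinarith [dist_nonneg (x := x) (y := l), dist_nonneg (x := x) (y := m)]
  · intro h
    nlinarith [dist_nonneg (x := x) (y := l), dist_nonneg (x := x) (y := m)]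

private lemma inner_lt_of_mem_interior {v : E} (hv : v ≠ 0) {c : ℝ} {x : E}
    (hx : x ∈ interior {y : E | (inner ℝ y v : ℝ) ≤ c}) : (inner ℝ x v : ℝ) < c := by
  obtain ⟨ε, hε, hball⟩ := Metric.isOpen_iff.mp isOpen_interior x hx
  have hvn : (0 : ℝ) < ‖v‖ := norm_pos_iff.mpr hv
  set t : ℝ := ε / (2 * ‖v‖) with ht
  have htpos : 0 < t := by positivity
  have hy : x + t • v ∈ Metric.ball x ε := by
    rw [Metric.mem_ball, dist_eq_norm]
    have h1 : x + t • v - x = t • v := by abel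
    have h2 : ‖t • v‖ = ε / 2 := by
      rw [norm_smul, Real.norm_eq_abs, abs_of_pos htpos, ht]
      field_simp
    rw [h1, h2]
    linarith
  have hyc : x + t • v ∈ {y : E | (inner ℝ y v : ℝ) ≤ c} := interior_subset (hball hy)
  have hyc' : (inner ℝ (x + t • v) v : ℝ) ≤ c := hyc
  have hexp : (inner ℝ (x + t • v) v : ℝ) = inner ℝ x v + t * ‖v‖ ^ 2 := by
    rw [inner_add_left, real_inner_smul_left, real_inner_self_eq_norm_sq]
  have hpos : 0 < t * ‖v‖ ^ 2 := by positivity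
  linarith [hexp ▸ hyc']

private lemma convex_bisector (l m : E) : Convex ℝ {x : E | dist x l ≤ dist x m} := by
  have h : {x : E | dist x l ≤ dist x m}
      = {x : E | (inner ℝ x (m - l) : ℝ) ≤ (‖m‖ ^ 2 - ‖l‖ ^ 2) / 2} := by
    ext x; exact bisector_iff x l m
  rw [h]
  exact convex_halfSpace_le
    ⟨fun a b => inner_add_left a b (m - l),
     fun c a => by simp [real_inner_smul_left, smul_eq_mul]⟩ _

private lemma closed_subset_closure_interior {s : Set E} (hs : Convex ℝ s)
    (hso : (interior s).Nonempty) (hcl : IsClosed s) :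
    s = closure (interior s) := by
  apply le_antisymm
  · intro x hx
    obtain ⟨y, hy⟩ := hso
    rw [Metric.mem_closure_iff]
    intro ε hε
    set t : ℝ := min 1 (ε / (‖y - x‖ + 1)) with htdef
    have hd : (0:ℝ) < ‖y - x‖ + 1 := by positivity
    have ht : t ∈ Set.Ioc (0:ℝ) 1 := by
      constructor
      · apply lt_min one_pos; positivity
      · exact min_le_left _ _
    refine ⟨x + t • (y - x), hs.add_smul_sub_mem_interior hx hy ht, ?_⟩
    rw [dist_eq_norm]
    have hq : x - (x + t • (y - x)) = (-t) • (y - x) := by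
      rw [neg_smul]; abel
    rw [hq, norm_smul, Real.norm_eq_abs, abs_neg, abs_of_pos ht.1]
    have h1 : t ≤ ε / (‖y - x‖ + 1) := min_le_right _ _
    have h2 : t * ‖y - x‖ ≤ (ε / (‖y - x‖ + 1)) * ‖y - x‖ :=
      mul_le_mul_of_nonneg_right h1 (norm_nonneg _)
    have h3 : (ε / (‖y - x‖ + 1)) * ‖y - x‖ < ε := by
      rw [div_mul_eq_mul_div, div_lt_iff₀ hd]
      nlinarith [norm_nonneg (y - x)]
    linarith
  · exact closure_minimal interior_subset hcl

end Aux

theorem alpha_cells_form_grid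
    {n : ℕ} (L : Finset (EuclideanSpace ℝ (Fin n))) (hL : L.Nonempty)
    (α : ℝ) (hα : 0 < α) :
    (∀ l ∈ L,
        ((Metric.closedBall l α ∩
            {x | ∀ l' ∈ L, dist x l ≤ dist x l'}).Nonempty ∧
          IsCompact (Metric.closedBall l α ∩
            {x | ∀ l' ∈ L, dist x l ≤ dist x l'}))) ∧
    (∀ l ∈ L,
        Metric.closedBall l α ∩ {x | ∀ l' ∈ L, dist x l ≤ dist x l'} =
          closure (interior (Metric.closedBall l α ∩
            {x | ∀ l' ∈ L, dist x l ≤ dist x l'}))) ∧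
    (∀ l ∈ L, ∀ m ∈ L, l ≠ m →
        (Metric.closedBall l α ∩ {x | ∀ l' ∈ L, dist x l ≤ dist x l'}) ∩
          interior (Metric.closedBall m α ∩
            {x | ∀ l' ∈ L, dist x m ≤ dist x l'}) = ∅) ∧
    (∀ S : Set (EuclideanSpace ℝ (Fin n)), IsCompact S →
        S ⊆ (⋃ l ∈ L, Metric.closedBall l α ∩
            {x | ∀ l' ∈ L, dist x l ≤ dist x l'}) →
        ∃ L' ⊆ L, (L' : Set (EuclideanSpace ℝ (Fin n))).Finite ∧
          S ⊆ ⋃ l ∈ L', Metric.closedBall l α ∩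
            {x | ∀ l' ∈ L, dist x l ≤ dist x l'}) := by
  classical
  have hmem : ∀ l ∈ L, l ∈ Metric.closedBall l α ∩
      {x : EuclideanSpace ℝ (Fin n) | ∀ l' ∈ L, dist x l ≤ dist x l'} := by
    intro l hl
    refine ⟨Metric.mem_closedBall_self hα.le, fun l' _ => ?_⟩
    rw [dist_self]
    exact dist_nonneg
  have hVor : ∀ l : EuclideanSpace ℝ (Fin n),
      {x : EuclideanSpace ℝ (Fin n) | ∀ l' ∈ L, dist x l ≤ dist x l'}
      = ⋂ l' ∈ L, {x : EuclideanSpace ℝ (Fin n) | dist x l ≤ dist x l'} := by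
    intro l; ext x; simp
  have hclosed : ∀ l : EuclideanSpace ℝ (Fin n), IsClosed (Metric.closedBall l α ∩
      {x : EuclideanSpace ℝ (Fin n) | ∀ l' ∈ L, dist x l ≤ dist x l'}) := by
    intro l
    refine Metric.isClosed_closedBall.inter ?_
    rw [hVor]
    exact isClosed_biInter fun l' _ =>
      isClosed_le (Continuous.dist continuous_id continuous_const)
        (Continuous.dist continuous_id continuous_const)
  have hconv : ∀ l : EuclideanSpace ℝ (Fin n), Convex ℝ (Metric.closedBall l α ∩
      {x : EuclideanSpace ℝ (Fin n) | ∀ l' ∈ L, dist x l ≤ dist x l'}) := by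
    intro l
    refine (convex_closedBall l α).inter ?_
    rw [hVor]
    exact convex_iInter fun l' => convex_iInter fun _ => convex_bisector l l'
  have hintmem : ∀ l ∈ L, l ∈ interior (Metric.closedBall l α ∩
      {x : EuclideanSpace ℝ (Fin n) | ∀ l' ∈ L, dist x l ≤ dist x l'}) := by
    intro l hl
    obtain ⟨r, hr, hrα, hrd⟩ : ∃ r > 0, r ≤ α ∧ ∀ l' ∈ L, l' ≠ l → 2 * r ≤ dist l l' := by
      rcases (L.erase l).eq_empty_or_nonempty with h | h
      · exact ⟨α, hα, le_refl _, fun l' hl' hne =>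
          absurd (Finset.mem_erase.mpr ⟨hne, hl'⟩) (by simp [h])⟩
      · set δ := (L.erase l).inf' h (dist l) with hδdef
        have hδ : 0 < δ := by
          rw [hδdef, Finset.lt_inf'_iff]
          intro l' hl'
          exact dist_pos.mpr (Ne.symm (Finset.mem_erase.mp hl').1)
        refine ⟨min α (δ / 2), lt_min hα (by linarith), min_le_left _ _, ?_⟩
        intro l' hl' hne
        have h1 : δ ≤ dist l l' := Finset.inf'_le _ (Finset.mem_erase.mpr ⟨hne, hl'⟩)
        have h2 : min α (δ / 2) ≤ δ / 2 := min_le_right _ _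
        linarith
    apply mem_interior.mpr
    refine ⟨Metric.ball l r, ?_, Metric.isOpen_ball, Metric.mem_ball_self hr⟩
    intro x hx
    rw [Metric.mem_ball] at hx
    constructor
    · rw [Metric.mem_closedBall]; linarith
    · intro l' hl'
      by_cases hne : l' = l
      · rw [hne]
      · have h1 : 2 * r ≤ dist l l' := hrd l' hl' hne
        have h2 : dist l l' ≤ dist l x + dist x l' := dist_triangle l x l'
        have h3 : dist l x = dist x l := dist_comm l x
        linarith
  refine ⟨?_, ?_, ?_, ?_⟩
  · intro l hl
    refine ⟨⟨l, hmem l hl⟩, ?_⟩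
    exact (isCompact_closedBall l α).of_isClosed_subset (hclosed l) inter_subset_left
  · intro l hl
    exact closed_subset_closure_interior (hconv l) ⟨l, hintmem l hl⟩ (hclosed l)
  · intro l hl m hm hne
    ext x
    simp only [Set.mem_inter_iff, Set.mem_empty_iff_false, iff_false, not_and]
    rintro ⟨-, hxl⟩ hxint
    have hsub : Metric.closedBall m α ∩
        {y : EuclideanSpace ℝ (Fin n) | ∀ l' ∈ L, dist y m ≤ dist y l'}
        ⊆ {y : EuclideanSpace ℝ (Fin n) |
            (inner ℝ y (l - m) : ℝ) ≤ (‖l‖ ^ 2 - ‖m‖ ^ 2) / 2} := by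
      rintro y ⟨-, hy⟩
      exact (bisector_iff y m l).mp (hy l hl)
    have hxint' : x ∈ interior {y : EuclideanSpace ℝ (Fin n) |
        (inner ℝ y (l - m) : ℝ) ≤ (‖l‖ ^ 2 - ‖m‖ ^ 2) / 2} :=
      interior_mono hsub hxint
    have hlt : (inner ℝ x (l - m) : ℝ) < (‖l‖ ^ 2 - ‖m‖ ^ 2) / 2 :=
      inner_lt_of_mem_interior (sub_ne_zero.mpr hne) hxint'
    have hge : (inner ℝ x (m - l) : ℝ) ≤ (‖m‖ ^ 2 - ‖l‖ ^ 2) / 2 :=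
      (bisector_iff x l m).mp (hxl m hm)
    have h1 : (inner ℝ x (l - m) : ℝ) = inner ℝ x l - inner ℝ x m := inner_sub_right x l m
    have h2 : (inner ℝ x (m - l) : ℝ) = inner ℝ x m - inner ℝ x l := inner_sub_right x m l
    linarith
  · intro S _ hS
    exact ⟨L, le_refl L, L.finite_toSet, hS⟩
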